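/- Let ι be a finite nonempty index type, ρ : ι → ℝ strictly positive weights with ∑ᵢ ρᵢ = 1, and ω : ι → ℝ. Let F : ℝ → ℝ be concave on [0,1] and strictly increasing on [0,1]. Let d₁ > d₂ ≥ 0 be reals and let s¹, s² : ι → [0,1] satisfy s¹ᵢ − s¹ⱼ = d₁·(ωᵢ − ωⱼ) and s²ᵢ − s²ⱼ = d₂·(ωᵢ − ωⱼ) for all i, j ∈ ι, together with the market-clearing condition ∑ᵢ ρᵢ·F(s¹ᵢ) = ∑ᵢ ρᵢ·F(s²ᵢ). Then ∑ᵢ ρᵢ·s¹ᵢ ≥ ∑ᵢ ρᵢ·s²ᵢ. -/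

import Mathlib

open Finset

theorem stmt_2 {ι : Type*} [Fintype ι] [Nonempty ι]
    (ρ ω : ι → ℝ) (hρ : ∀ i, 0 < ρ i) (hsum : ∑ i, ρ i = 1)
    (F : ℝ → ℝ) (hFconc : ConcaveOn ℝ (Set.Icc 0 1) F)
    (hFmono : StrictMonoOn F (Set.Icc 0 1))
    (d₁ d₂ : ℝ) (hd : d₂ < d₁) (hd₂ : 0 ≤ d₂)
    (s₁ s₂ : ι → ℝ)
    (hs₁ : ∀ i, s₁ i ∈ Set.Icc (0 : ℝ) 1) (hs₂ : ∀ i, s₂ i ∈ Set.Icc (0 : ℝ) 1)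
    (hdiff₁ : ∀ i j, s₁ i - s₁ j = d₁ * (ω i - ω j))
    (hdiff₂ : ∀ i j, s₂ i - s₂ j = d₂ * (ω i - ω j))
    (hmc : ∑ i, ρ i * F (s₁ i) = ∑ i, ρ i * F (s₂ i)) :
    ∑ i, ρ i * s₂ i ≤ ∑ i, ρ i * s₁ i := by
  by_contra hlt
  push_neg at hlt
  set m₁ := ∑ i, ρ i * s₁ i with hm₁
  set m₂ := ∑ i, ρ i * s₂ i with hm₂
  set ωb := ∑ i, ρ i * ω i with hωb
  have hd₁ : 0 < d₁ := lt_of_le_of_lt hd₂ hd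
  have key : ∀ (d : ℝ) (s : ι → ℝ), (∀ i j, s i - s j = d * (ω i - ω j)) →
      ∀ i, s i - (∑ j, ρ j * s j) = d * (ω i - ωb) := by
    intro d s hdiff i
    have h1 : ∑ j, ρ j * (s i - s j) = s i - ∑ j, ρ j * s j := by
      simp [mul_sub, Finset.sum_sub_distrib, ← Finset.sum_mul, hsum]
    have h2 : ∑ j, ρ j * (d * (ω i - ω j)) = d * (ω i - ωb) := by
      calc ∑ j, ρ j * (d * (ω i - ω j)) = d * ∑ j, ρ j * (ω i - ω j) := by
            rw [Finset.mul_sum]; exact Finset.sum_congr rfl fun j _ => by ring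
        _ = d * (ω i - ωb) := by
            rw [hωb]; congr 1
            simp [mul_sub, Finset.sum_sub_distrib, ← Finset.sum_mul, hsum]
    rw [← h1, ← h2]
    exact Finset.sum_congr rfl fun j _ => by rw [hdiff i j]
  have k₁ : ∀ i, s₁ i - m₁ = d₁ * (ω i - ωb) := key d₁ s₁ hdiff₁
  have k₂ : ∀ i, s₂ i - m₂ = d₂ * (ω i - ωb) := key d₂ s₂ hdiff₂
  have hm₁mem : m₁ ∈ Set.Icc (0 : ℝ) 1 := by
    constructor
    · exact Finset.sum_nonneg fun i _ => mul_nonneg (hρ i).le (hs₁ i).1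
    · calc m₁ ≤ ∑ i, ρ i * 1 := Finset.sum_le_sum fun i _ =>
            mul_le_mul_of_nonneg_left (hs₁ i).2 (hρ i).le
        _ = 1 := by simp [hsum]
  set lam := d₂ / d₁ with hlam
  have hlam0 : 0 ≤ lam := div_nonneg hd₂ hd₁.le
  have hlam1 : lam < 1 := (div_lt_one hd₁).2 hd
  set u : ι → ℝ := fun i => m₁ + d₂ * (ω i - ωb) with hu
  have hucomb : ∀ i, u i = lam * s₁ i + (1 - lam) * m₁ := by
    intro i
    have := k₁ i
    have hne : d₁ ≠ 0 := hd₁.ne'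
    field_simp [hu, hlam]
    have hs1 : s₁ i = m₁ + d₁ * (ω i - ωb) := by linarith
    have hdd : d₂ / d₁ * d₁ = d₂ := div_mul_cancel₀ d₂ hne
    simp only [hu, hlam]
    rw [hs1]
    linear_combination (-(ω i - ωb)) * hdd
  have humem : ∀ i, u i ∈ Set.Icc (0 : ℝ) 1 := by
    intro i
    rw [hucomb i]
    exact (convex_Icc (0:ℝ) 1) (hs₁ i) hm₁mem hlam0 (by linarith) (by ring)
  -- Jensen
  have hjensen : ∑ i, ρ i * F (s₁ i) ≤ F m₁ := by
    have := hFconc.le_map_sum (t := Finset.univ) (w := ρ) (p := s₁)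
      (fun i _ => (hρ i).le) hsum (fun i _ => hs₁ i)
    simpa [smul_eq_mul] using this
  -- concavity pointwise
  have hconc : ∀ i, lam * F (s₁ i) + (1 - lam) * F m₁ ≤ F (u i) := by
    intro i
    have := hFconc.2 (hs₁ i) hm₁mem hlam0 (by linarith : (0:ℝ) ≤ 1 - lam) (by ring)
    simpa [smul_eq_mul, ← hucomb i] using this
  have hb : ∑ i, ρ i * F (s₁ i) ≤ ∑ i, ρ i * F (u i) := by
    have step : ∑ i, ρ i * F (s₁ i) ≤ ∑ i, ρ i * (lam * F (s₁ i) + (1 - lam) * F m₁) := by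
      have e1 : ∑ i, ρ i * (lam * F (s₁ i)) = lam * ∑ i, ρ i * F (s₁ i) := by
        rw [Finset.mul_sum]; exact Finset.sum_congr rfl fun i _ => by ring
      have e2 : ∑ i, ρ i * ((1 - lam) * F m₁) = (1 - lam) * F m₁ := by
        rw [← Finset.sum_mul, hsum, one_mul]
      rw [show (fun i => ρ i * (lam * F (s₁ i) + (1 - lam) * F m₁)) = fun i => ρ i * (lam * F (s₁ i)) + ρ i * ((1 - lam) * F m₁) from funext fun i => by ring,
        Finset.sum_add_distrib, e1, e2]
      nlinarith [hjensen]
    refine step.trans (Finset.sum_le_sum fun i _ => ?_)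
    exact mul_le_mul_of_nonneg_left (hconc i) (hρ i).le
  have hc : ∑ i, ρ i * F (u i) < ∑ i, ρ i * F (s₂ i) := by
    refine Finset.sum_lt_sum_of_nonempty Finset.univ_nonempty fun i _ => ?_
    refine mul_lt_mul_of_pos_left ?_ (hρ i)
    refine hFmono (humem i) (hs₂ i) ?_
    have := k₂ i
    simp only [hu]
    linarith
  linarith
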